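/- The function f is even and all its Fourier sine coefficients vanish: b_n(f) = 0 for all n ≥ 1, and a_0(f) = 0. Moreover, for n ≥ 1 the Fourier cosine coefficients are given blockwise: if q_k − p_k ≤ n ≤ q_k − 1 for some k then a_n(f) = a_k/(q_k − n); if q_k + 1 ≤ n ≤ q_k + p_k for some k then a_n(f) = −a_k/(n − q_k); and a_n(f) = 0 for all other n (including n = q_k). -/

import Mathlib

open Finset Real Filter MeasureTheory intervalIntegral

/-- The trigonometric polynomial `T_{p,q}(x) = Σ_{m=1}^p cos((q−m)x)/m − Σ_{m=1}^p cos((q+m)x)/m`. -/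
noncomputable def T (p q : ℕ) (x : ℝ) : ℝ :=
  (∑ m ∈ Finset.Icc 1 p, Real.cos (((q : ℝ) - (m : ℝ)) * x) / (m : ℝ))
    - ∑ m ∈ Finset.Icc 1 p, Real.cos (((q : ℝ) + (m : ℝ)) * x) / (m : ℝ)

/-- Fourier cosine coefficient `a_n(g) = (1/π) ∫_{-π}^{π} g(t) cos(nt) dt`. -/
noncomputable def fourierA (g : ℝ → ℝ) (n : ℕ) : ℝ :=
  (1 / Real.pi) * ∫ t in (-Real.pi)..Real.pi, g t * Real.cos ((n : ℝ) * t)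

/-- Fourier sine coefficient `b_n(g) = (1/π) ∫_{-π}^{π} g(t) sin(nt) dt`. -/
noncomputable def fourierB (g : ℝ → ℝ) (n : ℕ) : ℝ :=
  (1 / Real.pi) * ∫ t in (-Real.pi)..Real.pi, g t * Real.sin ((n : ℝ) * t)

lemma cosmulcos (a b : ℝ) : Real.cos a * Real.cos b = (Real.cos (a - b) + Real.cos (a + b)) / 2 := by
  rw [Real.cos_add, Real.cos_sub]; ring

lemma integral_cos_int (r : ℝ) (z : ℤ) (hz : r = z) :
    ∫ t in (-Real.pi)..Real.pi, Real.cos (r * t) = if r = 0 then 2 * Real.pi else 0 := by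
  by_cases h : r = 0
  · simp [h, two_mul]
  · rw [if_neg h]
    have := intervalIntegral.integral_comp_mul_left (a := -Real.pi) (b := Real.pi)
      (f := Real.cos) h
    rw [this, integral_cos]
    have h1 : Real.sin (r * Real.pi) = 0 := by rw [hz]; exact Real.sin_int_mul_pi z
    have h2 : Real.sin (r * -Real.pi) = 0 := by
      rw [mul_neg, Real.sin_neg, hz, Real.sin_int_mul_pi z, neg_zero]
    rw [h1, h2]; simp

lemma cos_ortho (c d : ℝ) (zc zd : ℤ) (hc : c = zc) (hd : d = zd) :
    ∫ t in (-Real.pi)..Real.pi, Real.cos (c * t) * Real.cos (d * t)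
      = (if c = d then Real.pi else 0) + (if c = -d then Real.pi else 0) := by
  have key : ∀ t : ℝ, Real.cos (c * t) * Real.cos (d * t)
      = (Real.cos ((c - d) * t) + Real.cos ((c + d) * t)) / 2 := by
    intro t
    rw [cosmulcos]
    ring_nf
  simp_rw [key]
  rw [intervalIntegral.integral_div]
  rw [intervalIntegral.integral_add
    (Continuous.intervalIntegrable (by fun_prop) _ _)
    (Continuous.intervalIntegrable (by fun_prop) _ _)]
  rw [integral_cos_int (c - d) (zc - zd) (by push_cast [hc, hd]; ring),
      integral_cos_int (c + d) (zc + zd) (by push_cast [hc, hd]; ring)]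
  have e1 : (c - d = 0) ↔ c = d := sub_eq_zero
  have e2 : (c + d = 0) ↔ c = -d := add_eq_zero_iff_eq_neg
  simp only [e1, e2]
  by_cases h1 : c = d <;> by_cases h2 : c = -d <;>
    [rw [if_pos h1, if_pos h2, if_pos h1, if_pos h2];
     rw [if_pos h1, if_neg h2, if_pos h1, if_neg h2];
     rw [if_neg h1, if_pos h2, if_neg h1, if_pos h2];
     rw [if_neg h1, if_neg h2, if_neg h1, if_neg h2]] <;> ring

lemma T_eq (p q : ℕ) (x : ℝ) : T p q x
    = ∑ m ∈ Finset.Icc 1 p,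
      (Real.cos (((q : ℝ) - m) * x) - Real.cos (((q : ℝ) + m) * x)) / m := by
  unfold T
  rw [← Finset.sum_sub_distrib]
  exact Finset.sum_congr rfl fun m _ => by ring

lemma T_cont (p q : ℕ) : Continuous (T p q) := by
  unfold T; fun_prop

-- single-term integral
lemma term_int (q m n : ℕ) (hm : 1 ≤ m) (hmq : m < q) :
    ∫ t in (-Real.pi)..Real.pi,
      ((Real.cos (((q : ℝ) - m) * t) - Real.cos (((q : ℝ) + m) * t)) / m) * Real.cos ((n:ℝ) * t)
      = (if q = n + m then Real.pi else 0) / m - (if n = q + m then Real.pi else 0) / m := by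
  have key : ∀ t : ℝ,
      ((Real.cos (((q : ℝ) - m) * t) - Real.cos (((q : ℝ) + m) * t)) / m) * Real.cos ((n:ℝ) * t)
      = (Real.cos (((q : ℝ) - m) * t) * Real.cos ((n:ℝ) * t)
        - Real.cos (((q : ℝ) + m) * t) * Real.cos ((n:ℝ) * t)) / m := fun t => by ring
  simp_rw [key]
  rw [intervalIntegral.integral_div, intervalIntegral.integral_sub
    (Continuous.intervalIntegrable (by fun_prop) _ _)
    (Continuous.intervalIntegrable (by fun_prop) _ _),
    cos_ortho _ _ ((q:ℤ) - m) n (by push_cast; ring) (by push_cast; ring),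
    cos_ortho _ _ ((q:ℤ) + m) n (by push_cast; ring) (by push_cast; ring)]
  have h1 : ((q:ℝ) - m = -(n:ℝ)) = False := by
    simp only [eq_iff_iff, iff_false]
    intro h
    have : (1:ℝ) ≤ (q:ℝ) - m := by
      have : (m:ℝ) + 1 ≤ q := by exact_mod_cast hmq
      linarith
    have : (0:ℝ) ≤ (n:ℝ) := Nat.cast_nonneg n
    linarith
  have h2 : ((q:ℝ) + m = -(n:ℝ)) = False := by
    simp only [eq_iff_iff, iff_false]
    intro h
    have h1' : (1:ℝ) ≤ (m:ℝ) := by exact_mod_cast hm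
    have : (0:ℝ) ≤ (q:ℝ) := Nat.cast_nonneg q
    have : (0:ℝ) ≤ (n:ℝ) := Nat.cast_nonneg n
    linarith
  have h3 : ((q:ℝ) - m = (n:ℝ)) = (q = n + m) := by
    simp only [eq_iff_iff]
    rw [sub_eq_iff_eq_add]
    constructor
    · intro h; exact_mod_cast h
    · intro h; exact_mod_cast congrArg (Nat.cast : ℕ → ℝ) h
  have h4 : ((q:ℝ) + m = (n:ℝ)) = (n = q + m) := by
    simp only [eq_iff_iff]
    constructor
    · intro h; exact_mod_cast h.symm
    · intro h; exact_mod_cast (congrArg (Nat.cast : ℕ → ℝ) h).symm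
  simp only [h1, h2, h3, h4, if_false]
  ring

lemma T_int (p q : ℕ) (hp : 1 ≤ p) (hq : p < q) (n : ℕ) :
    ∫ t in (-Real.pi)..Real.pi, T p q t * Real.cos ((n:ℝ) * t)
    = if q - p ≤ n ∧ n ≤ q - 1 then Real.pi / ((q:ℝ) - n)
      else if q + 1 ≤ n ∧ n ≤ q + p then -(Real.pi / ((n:ℝ) - q)) else 0 := by
  have e1 : ∀ t : ℝ, T p q t * Real.cos ((n:ℝ) * t)
      = ∑ m ∈ Finset.Icc 1 p,
        ((Real.cos (((q : ℝ) - m) * t) - Real.cos (((q : ℝ) + m) * t)) / m) * Real.cos ((n:ℝ) * t) := by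
    intro t; rw [T_eq, Finset.sum_mul]
  simp_rw [e1]
  rw [intervalIntegral.integral_finset_sum
    (fun m _ => Continuous.intervalIntegrable (by fun_prop) _ _)]
  have e2 : ∀ m ∈ Finset.Icc 1 p,
      (∫ t in (-Real.pi)..Real.pi,
        ((Real.cos (((q : ℝ) - m) * t) - Real.cos (((q : ℝ) + m) * t)) / m) * Real.cos ((n:ℝ) * t))
      = (if q = n + m then Real.pi else 0) / m - (if n = q + m then Real.pi else 0) / m := by
    intro m hm
    rw [Finset.mem_Icc] at hm
    exact term_int q m n hm.1 (lt_of_le_of_lt hm.2 hq)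
  rw [Finset.sum_congr rfl e2, Finset.sum_sub_distrib]
  have hA : ∑ m ∈ Finset.Icc 1 p, (if q = n + m then Real.pi else 0) / m
      = if q - p ≤ n ∧ n ≤ q - 1 then Real.pi / ((q:ℝ) - n) else 0 := by
    by_cases hc : q - p ≤ n ∧ n ≤ q - 1
    · rw [if_pos hc]
      rw [Finset.sum_eq_single_of_mem (q - n) (by rw [Finset.mem_Icc]; omega)]
      · rw [if_pos (by omega)]
        congr 1
        have : n ≤ q := by omega
        push_cast [Nat.cast_sub this]
        ring
      · intro m hm hne
        rw [if_neg (by omega), zero_div]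
    · rw [if_neg hc]
      apply Finset.sum_eq_zero
      intro m hm
      rw [Finset.mem_Icc] at hm
      rw [if_neg (by omega), zero_div]
  have hB : ∑ m ∈ Finset.Icc 1 p, (if n = q + m then Real.pi else 0) / m
      = if q + 1 ≤ n ∧ n ≤ q + p then Real.pi / ((n:ℝ) - q) else 0 := by
    by_cases hc : q + 1 ≤ n ∧ n ≤ q + p
    · rw [if_pos hc]
      rw [Finset.sum_eq_single_of_mem (n - q) (by rw [Finset.mem_Icc]; omega)]
      · rw [if_pos (by omega)]
        congr 1
        have : q ≤ n := by omega
        push_cast [Nat.cast_sub this]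
        ring
      · intro m hm hne
        rw [if_neg (by omega), zero_div]
    · rw [if_neg hc]
      apply Finset.sum_eq_zero
      intro m hm
      rw [Finset.mem_Icc] at hm
      rw [if_neg (by omega), zero_div]
  rw [hA, hB]
  by_cases hc1 : q - p ≤ n ∧ n ≤ q - 1
  · rw [if_pos hc1, if_pos hc1, if_neg (by omega), sub_zero]
  · rw [if_neg hc1, if_neg hc1, zero_sub]
    by_cases hc2 : q + 1 ≤ n ∧ n ≤ q + p
    · rw [if_pos hc2, if_pos hc2]
    · rw [if_neg hc2, if_neg hc2, neg_zero]

lemma sq_term_int (q m m' : ℕ) (hm : 1 ≤ m) (hmq : m < q) (hm' : 1 ≤ m') (hmq' : m' < q) :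
    ∫ t in (-Real.pi)..Real.pi,
      ((Real.cos (((q : ℝ) - m) * t) - Real.cos (((q : ℝ) + m) * t)) / m)
        * ((Real.cos (((q : ℝ) - m') * t) - Real.cos (((q : ℝ) + m') * t)) / m')
      = if m = m' then 2 * Real.pi / (m:ℝ)^2 else 0 := by
  have key : ∀ t : ℝ,
      ((Real.cos (((q : ℝ) - m) * t) - Real.cos (((q : ℝ) + m) * t)) / m)
        * ((Real.cos (((q : ℝ) - m') * t) - Real.cos (((q : ℝ) + m') * t)) / m')
      = (Real.cos (((q : ℝ) - m) * t) * Real.cos (((q : ℝ) - m') * t)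
        - Real.cos (((q : ℝ) - m) * t) * Real.cos (((q : ℝ) + m') * t)
        - Real.cos (((q : ℝ) + m) * t) * Real.cos (((q : ℝ) - m') * t)
        + Real.cos (((q : ℝ) + m) * t) * Real.cos (((q : ℝ) + m') * t)) / ((m:ℝ) * m') :=
    fun t => by ring
  simp_rw [key]
  rw [intervalIntegral.integral_div, intervalIntegral.integral_add
      ((Continuous.intervalIntegrable (by fun_prop) _ _).sub
        (Continuous.intervalIntegrable (by fun_prop) _ _))
      (Continuous.intervalIntegrable (by fun_prop) _ _),
    intervalIntegral.integral_sub
      ((Continuous.intervalIntegrable (by fun_prop) _ _).sub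
        (Continuous.intervalIntegrable (by fun_prop) _ _))
      (Continuous.intervalIntegrable (by fun_prop) _ _),
    intervalIntegral.integral_sub
      (Continuous.intervalIntegrable (by fun_prop) _ _)
      (Continuous.intervalIntegrable (by fun_prop) _ _),
    cos_ortho _ _ ((q:ℤ) - m) ((q:ℤ) - m') (by push_cast; ring) (by push_cast; ring),
    cos_ortho _ _ ((q:ℤ) - m) ((q:ℤ) + m') (by push_cast; ring) (by push_cast; ring),
    cos_ortho _ _ ((q:ℤ) + m) ((q:ℤ) - m') (by push_cast; ring) (by push_cast; ring),
    cos_ortho _ _ ((q:ℤ) + m) ((q:ℤ) + m') (by push_cast; ring) (by push_cast; ring)]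
  have c1 : (1:ℝ) ≤ (q:ℝ) - m := by
    have : (m:ℝ) + 1 ≤ q := by exact_mod_cast hmq
    linarith
  have c1' : (1:ℝ) ≤ (q:ℝ) - m' := by
    have : (m':ℝ) + 1 ≤ q := by exact_mod_cast hmq'
    linarith
  have cm : (1:ℝ) ≤ (m:ℝ) := by exact_mod_cast hm
  have cm' : (1:ℝ) ≤ (m':ℝ) := by exact_mod_cast hm'
  have cq : (0:ℝ) ≤ (q:ℝ) := Nat.cast_nonneg q
  have e1 : ((q:ℝ) - m = (q:ℝ) - m') = (m = m') := by
    simp only [eq_iff_iff]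
    constructor
    · intro h; exact_mod_cast (by linarith : (m:ℝ) = m')
    · intro h; rw [h]
  have e2 : ((q:ℝ) - m = -((q:ℝ) - m')) = False := by
    simp only [eq_iff_iff, iff_false]; intro h; linarith
  have e3 : ((q:ℝ) - m = (q:ℝ) + m') = False := by
    simp only [eq_iff_iff, iff_false]; intro h; linarith
  have e4 : ((q:ℝ) - m = -((q:ℝ) + m')) = False := by
    simp only [eq_iff_iff, iff_false]; intro h; linarith
  have e5 : ((q:ℝ) + m = (q:ℝ) - m') = False := by
    simp only [eq_iff_iff, iff_false]; intro h; linarith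
  have e6 : ((q:ℝ) + m = -((q:ℝ) - m')) = False := by
    simp only [eq_iff_iff, iff_false]; intro h; linarith
  have e7 : ((q:ℝ) + m = (q:ℝ) + m') = (m = m') := by
    simp only [eq_iff_iff]
    constructor
    · intro h; exact_mod_cast (by linarith : (m:ℝ) = m')
    · intro h; rw [h]
  have e8 : ((q:ℝ) + m = -((q:ℝ) + m')) = False := by
    simp only [eq_iff_iff, iff_false]; intro h; linarith
  simp only [e1, e2, e3, e4, e5, e6, e7, e8, if_false]
  by_cases h : m = m'
  · subst h
    simp only [if_pos rfl, if_true]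
    field_simp
    ring
  · simp [h]

lemma sum_inv_sq : ∀ p : ℕ, 1 ≤ p → ∑ m ∈ Finset.Icc 1 p, (1:ℝ)/(m:ℝ)^2 ≤ 2 - 1/(p:ℝ) := by
  intro p hp
  induction p, hp using Nat.le_induction with
  | base => norm_num
  | succ p hp ih =>
    rw [Finset.sum_Icc_succ_top (by omega : 1 ≤ p + 1)]
    have hp0 : (1:ℝ) ≤ (p:ℝ) := by exact_mod_cast hp
    have h1 : (0:ℝ) < (p:ℝ) := by linarith
    have h2 : (0:ℝ) < (p:ℝ) + 1 := by linarith
    have key : (1:ℝ)/((p:ℝ)+1)^2 ≤ 1/(p:ℝ) - 1/((p:ℝ)+1) := by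
      rw [div_sub_div _ _ (ne_of_gt h1) (ne_of_gt h2), div_le_div_iff₀ (by positivity) (by positivity)]
      ring_nf
      nlinarith
    push_cast
    linarith

lemma T_sq_le (p q : ℕ) (hp : 1 ≤ p) (hq : p < q) :
    ∫ t in (-Real.pi)..Real.pi, (T p q t)^2 ≤ 4 * Real.pi := by
  have e : ∀ t : ℝ, (T p q t)^2 = ∑ m ∈ Finset.Icc 1 p, ∑ m' ∈ Finset.Icc 1 p,
      ((Real.cos (((q : ℝ) - m) * t) - Real.cos (((q : ℝ) + m) * t)) / m)
        * ((Real.cos (((q : ℝ) - m') * t) - Real.cos (((q : ℝ) + m') * t)) / m') := by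
    intro t
    rw [sq, T_eq, Finset.sum_mul_sum]
  simp_rw [e]
  rw [intervalIntegral.integral_finset_sum (fun m _ =>
    Continuous.intervalIntegrable (continuous_finset_sum _ fun m' _ => by fun_prop) _ _)]
  have e2 : ∀ m ∈ Finset.Icc 1 p,
      (∫ t in (-Real.pi)..Real.pi, ∑ m' ∈ Finset.Icc 1 p,
        ((Real.cos (((q : ℝ) - m) * t) - Real.cos (((q : ℝ) + m) * t)) / m)
        * ((Real.cos (((q : ℝ) - m') * t) - Real.cos (((q : ℝ) + m') * t)) / m'))
      = 2 * Real.pi / (m:ℝ)^2 := by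
    intro m hm
    rw [Finset.mem_Icc] at hm
    rw [intervalIntegral.integral_finset_sum (fun m' _ =>
      Continuous.intervalIntegrable (by fun_prop) _ _)]
    have e3 : ∀ m' ∈ Finset.Icc 1 p,
        (∫ t in (-Real.pi)..Real.pi,
          ((Real.cos (((q : ℝ) - m) * t) - Real.cos (((q : ℝ) + m) * t)) / m)
          * ((Real.cos (((q : ℝ) - m') * t) - Real.cos (((q : ℝ) + m') * t)) / m'))
        = if m = m' then 2 * Real.pi / (m:ℝ)^2 else 0 := by
      intro m' hm'
      rw [Finset.mem_Icc] at hm'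
      exact sq_term_int q m m' hm.1 (lt_of_le_of_lt hm.2 hq) hm'.1 (lt_of_le_of_lt hm'.2 hq)
    rw [Finset.sum_congr rfl e3, Finset.sum_ite_eq, if_pos (by rw [Finset.mem_Icc]; omega)]
  rw [Finset.sum_congr rfl e2]
  have e4 : ∑ m ∈ Finset.Icc 1 p, 2 * Real.pi / (m:ℝ)^2
      = (2 * Real.pi) * ∑ m ∈ Finset.Icc 1 p, (1:ℝ)/(m:ℝ)^2 := by
    rw [Finset.mul_sum]
    exact Finset.sum_congr rfl fun m _ => by ring
  rw [e4]
  have h5 := sum_inv_sq p hp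
  have hp1 : (0:ℝ) < (p:ℝ) := by exact_mod_cast hp
  have h6 : ∑ m ∈ Finset.Icc 1 p, (1:ℝ)/(m:ℝ)^2 ≤ 2 := by
    have : (0:ℝ) < 1/(p:ℝ) := by positivity
    linarith
  nlinarith [Real.pi_pos]

lemma norm_int_le (p q n : ℕ) (hp : 1 ≤ p) (hq : p < q) (ak : ℝ) (ha : 0 ≤ ak) :
    ∫ t in (-Real.pi)..Real.pi, ‖ak * (T p q t * Real.cos ((n:ℝ) * t))‖
      ≤ 3 * Real.pi * ak := by
  have hle : -Real.pi ≤ Real.pi := by linarith [Real.pi_pos]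
  have hcont : Continuous fun t : ℝ => ak * (T p q t * Real.cos ((n:ℝ) * t)) := by
    have := T_cont p q
    fun_prop
  have mono : ∫ t in (-Real.pi)..Real.pi, ‖ak * (T p q t * Real.cos ((n:ℝ) * t))‖
      ≤ ∫ t in (-Real.pi)..Real.pi, ak * ((T p q t)^2 + 1) / 2 := by
    apply intervalIntegral.integral_mono_on hle
      (hcont.norm.intervalIntegrable _ _)
      (Continuous.intervalIntegrable (by have := T_cont p q; fun_prop) _ _)
    intro t _
    rw [Real.norm_eq_abs, abs_mul, abs_of_nonneg ha, abs_mul]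
    have h1 : |Real.cos ((n:ℝ) * t)| ≤ 1 := Real.abs_cos_le_one _
    have h2 : |T p q t| * |Real.cos ((n:ℝ) * t)| ≤ |T p q t| := by
      nlinarith [abs_nonneg (T p q t), abs_nonneg (Real.cos ((n:ℝ)*t))]
    have h3 : |T p q t| ≤ ((T p q t)^2 + 1) / 2 := by
      nlinarith [sq_nonneg (|T p q t| - 1), sq_abs (T p q t)]
    calc ak * (|T p q t| * |Real.cos ((n:ℝ) * t)|) ≤ ak * (((T p q t)^2 + 1)/2) := by
          apply mul_le_mul_of_nonneg_left _ ha
          linarith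
      _ = ak * ((T p q t)^2 + 1) / 2 := by ring
  have e : ∀ t : ℝ, ak * ((T p q t)^2 + 1) / 2 = (ak/2) * ((T p q t)^2 + 1) :=
    fun t => by ring
  simp_rw [e] at mono
  rw [intervalIntegral.integral_const_mul, intervalIntegral.integral_add
      (Continuous.intervalIntegrable (by have := T_cont p q; fun_prop) _ _)
      intervalIntegrable_const, intervalIntegral.integral_const] at mono
  have hT := T_sq_le p q hp hq
  have hpi := Real.pi_pos
  calc ∫ t in (-Real.pi)..Real.pi, ‖ak * (T p q t * Real.cos ((n:ℝ) * t))‖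
      ≤ ak/2 * ((∫ t in (-Real.pi)..Real.pi, (T p q t)^2) + (Real.pi - -Real.pi) • (1:ℝ)) := mono
    _ ≤ ak/2 * (4*Real.pi + 2*Real.pi) := by
        apply mul_le_mul_of_nonneg_left _ (by linarith)
        simp only [smul_eq_mul]
        linarith
    _ = 3 * Real.pi * ak := by ring

/-- `f` is even, all its Fourier sine coefficients vanish, `a_0(f) = 0`, and for `n ≥ 1` the
cosine coefficients are given blockwise: `a_n(f) = a_k/(q_k − n)` if `q_k − p_k ≤ n ≤ q_k − 1`,
`a_n(f) = −a_k/(n − q_k)` if `q_k + 1 ≤ n ≤ q_k + p_k`, and `a_n(f) = 0` for all other `n`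
(including `n = q_k`). -/
theorem stmt_10 (p q : ℕ → ℕ) (a : ℕ → ℝ)
    (hpq : ∀ k, 1 < p k ∧ p k < q k)
    (hsep : ∀ k, q k + p k < q (k + 1) - p (k + 1))
    (hapos : ∀ k, 0 < a k)
    (hsum : Summable a)
    (hliminf : 0 < Filter.liminf (fun k => a k * Real.log (p k)) Filter.atTop)
    (f : ℝ → ℝ) (hf : ∀ x, f x = ∑' k, a k * T (p k) (q k) x) :
    (∀ x : ℝ, f (-x) = f x)
      ∧ (∀ n : ℕ, 1 ≤ n → fourierB f n = 0)
      ∧ fourierA f 0 = 0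
      ∧ (∀ n : ℕ, 1 ≤ n →
          (∀ k, q k - p k ≤ n → n ≤ q k - 1 →
            fourierA f n = a k / ((q k : ℝ) - (n : ℝ)))
          ∧ (∀ k, q k + 1 ≤ n → n ≤ q k + p k →
            fourierA f n = -(a k / ((n : ℝ) - (q k : ℝ))))
          ∧ ((∀ k, n = q k ∨ n < q k - p k ∨ q k + p k < n) → fourierA f n = 0)) := by
  have hpi := Real.pi_pos
  have hle : -Real.pi ≤ Real.pi := by linarith
  -- evenness
  have heven : ∀ x : ℝ, f (-x) = f x := by
    intro x
    rw [hf, hf]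
    apply tsum_congr
    intro k
    congr 1
    unfold T
    simp only [mul_neg, Real.cos_neg]
  -- key swap
  have key : ∀ n : ℕ, fourierA f n
      = (1 / Real.pi) * ∑' k, a k *
        ∫ t in (-Real.pi)..Real.pi, T (p k) (q k) t * Real.cos ((n:ℝ) * t) := by
    intro n
    unfold fourierA
    congr 1
    have e : ∀ t : ℝ, f t * Real.cos ((n:ℝ) * t)
        = ∑' k, a k * (T (p k) (q k) t * Real.cos ((n:ℝ) * t)) := by
      intro t
      rw [hf t, ← tsum_mul_right]
      exact tsum_congr fun k => by ring
    simp_rw [e]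
    have hcont : ∀ k, Continuous fun t : ℝ =>
        a k * (T (p k) (q k) t * Real.cos ((n:ℝ) * t)) := by
      intro k
      have := T_cont (p k) (q k)
      fun_prop
    have hInt : ∀ k, Integrable (fun t : ℝ => a k * (T (p k) (q k) t * Real.cos ((n:ℝ) * t)))
        (MeasureTheory.volume.restrict (Set.Ioc (-Real.pi) Real.pi)) :=
      fun k => (hcont k).integrableOn_Ioc
    have hSum : Summable fun k =>
        ∫ t in Set.Ioc (-Real.pi) Real.pi,
          ‖a k * (T (p k) (q k) t * Real.cos ((n:ℝ) * t))‖ := by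
      apply Summable.of_nonneg_of_le
        (fun k => MeasureTheory.integral_nonneg fun t => norm_nonneg _)
        (fun k => ?_) (hsum.mul_left (3 * Real.pi))
      rw [← intervalIntegral.integral_of_le hle]
      exact norm_int_le (p k) (q k) n (le_of_lt (hpq k).1) (hpq k).2 (a k)
        (le_of_lt (hapos k))
    rw [intervalIntegral.integral_of_le hle,
      ← MeasureTheory.integral_tsum_of_summable_integral_norm hInt hSum]
    apply tsum_congr
    intro k
    rw [← intervalIntegral.integral_of_le hle, intervalIntegral.integral_const_mul]
  -- blocks monotonicity
  have hblock : ∀ j k, j < k → q j + p j < q k - p k := by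
    intro j k hjk
    induction k with
    | zero => omega
    | succ k ih =>
      rcases Nat.lt_succ_iff_lt_or_eq.mp hjk with h | h
      · have h1 := ih h
        have h2 := hsep k
        have h3 := (hpq k).2
        omega
      · subst h; exact hsep j
  refine ⟨heven, ?_, ?_, ?_⟩
  · -- sine coefficients
    intro n _
    unfold fourierB
    have hodd : ∀ t : ℝ, f (-t) * Real.sin ((n:ℝ) * -t) = -(f t * Real.sin ((n:ℝ) * t)) := by
      intro t
      rw [heven t, mul_neg, Real.sin_neg]
      ring
    have h1 := intervalIntegral.integral_comp_neg (a := -Real.pi) (b := Real.pi)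
      (f := fun t => f t * Real.sin ((n:ℝ) * t))
    simp only [neg_neg] at h1
    simp_rw [hodd] at h1
    rw [intervalIntegral.integral_neg] at h1
    have : ∫ t in (-Real.pi)..Real.pi, f t * Real.sin ((n:ℝ) * t) = 0 := by linarith
    rw [this, mul_zero]
  · -- a_0 = 0
    rw [key 0]
    have : ∀ k, a k * (∫ t in (-Real.pi)..Real.pi,
        T (p k) (q k) t * Real.cos ((((0:ℕ)):ℝ) * t)) = 0 := by
      intro k
      rw [T_int _ _ (le_of_lt (hpq k).1) (hpq k).2 0, if_neg ?_, if_neg ?_, mul_zero]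
      · have := (hpq k).2; have := (hpq k).1
        omega
      · have := (hpq k).2; have := (hpq k).1
        omega
    rw [tsum_congr this, tsum_zero, mul_zero]
  · intro n hn
    have hval : ∀ k, (∫ t in (-Real.pi)..Real.pi, T (p k) (q k) t * Real.cos ((n:ℝ) * t))
        = if q k - p k ≤ n ∧ n ≤ q k - 1 then Real.pi / ((q k:ℝ) - n)
          else if q k + 1 ≤ n ∧ n ≤ q k + p k then -(Real.pi / ((n:ℝ) - q k)) else 0 :=
      fun k => T_int _ _ (le_of_lt (hpq k).1) (hpq k).2 n
    refine ⟨?_, ?_, ?_⟩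
    · intro k hk1 hk2
      rw [key n, tsum_eq_single k ?_]
      · rw [hval k, if_pos ⟨hk1, hk2⟩]
        have hnq : n < q k := by have := (hpq k).2; omega
        have hx : (0:ℝ) < (q k:ℝ) - n := by
          have : (n:ℝ) < (q k:ℝ) := by exact_mod_cast hnq
          linarith
        field_simp
      · intro j hj
        rw [hval j, if_neg ?_, if_neg ?_, mul_zero]
        · rcases lt_or_gt_of_ne hj with h | h
          · have := hblock j k h
            have := (hpq j).2
            have := (hpq k).2
            omega
          · have := hblock k j h
            have := (hpq j).2
            have := (hpq k).2
            omega
        · rcases lt_or_gt_of_ne hj with h | h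
          · have := hblock j k h
            have := (hpq j).2
            have := (hpq k).2
            omega
          · have := hblock k j h
            have := (hpq j).2
            have := (hpq k).2
            omega
    · intro k hk1 hk2
      rw [key n, tsum_eq_single k ?_]
      · rw [hval k, if_neg (by omega), if_pos ⟨hk1, hk2⟩]
        have hx : (0:ℝ) < (n:ℝ) - q k := by
          have : (q k:ℝ) < (n:ℝ) := by exact_mod_cast (by omega : q k < n)
          linarith
        field_simp
      · intro j hj
        rw [hval j, if_neg ?_, if_neg ?_, mul_zero]
        · rcases lt_or_gt_of_ne hj with h | h
          · have := hblock j k h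
            have := (hpq j).2
            have := (hpq k).2
            omega
          · have := hblock k j h
            have := (hpq j).2
            have := (hpq k).2
            omega
        · rcases lt_or_gt_of_ne hj with h | h
          · have := hblock j k h
            have := (hpq j).2
            have := (hpq k).2
            omega
          · have := hblock k j h
            have := (hpq j).2
            have := (hpq k).2
            omega
    · intro hall
      rw [key n]
      have : ∀ k, a k * (∫ t in (-Real.pi)..Real.pi,
          T (p k) (q k) t * Real.cos ((n:ℝ) * t)) = 0 := by
        intro k
        rw [hval k, if_neg ?_, if_neg ?_, mul_zero]
        · rcases hall k with h | h | h
          · have := (hpq k).2; have := (hpq k).1; omega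
          · omega
          · omega
        · rcases hall k with h | h | h
          · omega
          · omega
          · omega
      rw [tsum_congr this, tsum_zero, mul_zero]
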